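/- Let (Ω, 𝓕, μ) be a probability space with 𝓕 a standard Borel structure, let Y : Ω → E be a measurable map into a measurable space E, let X₁, X₂ : Ω → ℝ be measurable, and let L : Ω → F be a measurable map into a measurable space F. Suppose (i) Y is conditionally independent of X₁ given the σ-algebra generated by L, and (ii) Y is conditionally independent of X₂ − X₁ given the σ-algebra generated by (X₁, L). Then Y is conditionally independent of X₂ given the σ-algebra generated by (X₁, L). -/

import Mathlib

open MeasureTheory ProbabilityTheory

/-- **Lemma 2 (transfer of conditional independence to `X₂ = X₁ + (X₂ − X₁)`).**
On a standard Borel probability space, if `Y` is conditionally independent of `X₁`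
given `σ(L)`, and `Y` is conditionally independent of the increment `X₂ − X₁` given
`σ(X₁, L)`, then `Y` is conditionally independent of `X₂` given `σ(X₁, L)`. -/
theorem condIndep_of_condIndep_increment
    {Ω E F : Type*} [mΩ : MeasurableSpace Ω] [StandardBorelSpace Ω]
    [MeasurableSpace E] [MeasurableSpace F]
    (μ : Measure Ω) [IsProbabilityMeasure μ]
    (Y : Ω → E) (X₁ X₂ : Ω → ℝ) (L : Ω → F)
    (hY : Measurable Y) (hX₁ : Measurable X₁) (hX₂ : Measurable X₂) (hL : Measurable L)
    (h1 : CondIndepFun (MeasurableSpace.comap L inferInstance)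
      (measurable_iff_comap_le.mp hL) Y X₁ μ)
    (h2 : CondIndepFun (MeasurableSpace.comap (fun ω => (X₁ ω, L ω)) inferInstance)
      (measurable_iff_comap_le.mp (hX₁.prodMk hL)) Y (fun ω => X₂ ω - X₁ ω) μ) :
    CondIndepFun (MeasurableSpace.comap (fun ω => (X₁ ω, L ω)) inferInstance)
      (measurable_iff_comap_le.mp (hX₁.prodMk hL)) Y X₂ μ := by
  classical
  set m' : MeasurableSpace Ω :=
    MeasurableSpace.comap (fun ω => (X₁ ω, L ω)) inferInstance with hm'def
  have hm' : m' ≤ mΩ := measurable_iff_comap_le.mp (hX₁.prodMk hL)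
  set D : Ω → ℝ := fun ω => X₂ ω - X₁ ω with hDdef
  set κ := condExpKernel (mΩ := mΩ) μ m' with hκdef
  set ν := μ.trim (measurable_iff_comap_le.mp (hX₁.prodMk hL)) with hνdef
  letI : MeasurableSpace Ω := mΩ
  -- X₁ is m'-measurable
  have hpair : Measurable[m'] (fun ω => (X₁ ω, L ω)) := Measurable.of_comap_le le_rfl
  have hX₁m' : Measurable[m'] X₁ := measurable_fst.comp hpair
  have hcomapX₁ : MeasurableSpace.comap X₁ inferInstance ≤ m' :=
    measurable_iff_comap_le.mp hX₁m'
  -- under the conditional kernel, m'-measurable sets have indicator measure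
  have hind : ∀ c : Set Ω, MeasurableSet[m'] c →
      ∀ᵐ a ∂ν, κ a c = c.indicator (fun _ => (1 : ENNReal)) a := by
    intro c hc
    have hcond : (μ⟦c | m'⟧) = c.indicator (fun _ => (1 : ℝ)) :=
      condExp_of_stronglyMeasurable hm'
        ((stronglyMeasurable_const).indicator hc)
        ((integrable_const (1 : ℝ)).indicator (hm' _ hc))
    have h := condExpKernel_ae_eq_trim_condExp
      (μ := μ) (measurable_iff_comap_le.mp (hX₁.prodMk hL)) (hm' _ hc)
    rw [hcond] at h
    filter_upwards [h] with a ha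
    by_cases hac : a ∈ c
    · rw [Set.indicator_of_mem hac] at ha ⊢
      have hnetop : κ a c ≠ ⊤ := measure_ne_top _ _
      have : (κ a c).toReal = ((1 : ENNReal)).toReal := by rw [ENNReal.toReal_one]; exact ha
      exact (ENNReal.toReal_eq_toReal_iff' hnetop (by simp)).mp this
    · rw [Set.indicator_of_notMem hac] at ha ⊢
      have hnetop : κ a c ≠ ⊤ := measure_ne_top _ _
      rcases (ENNReal.toReal_eq_zero_iff _).mp ha with h0 | h0
      · exact h0
      · exact absurd h0 hnetop
  -- key: intersecting with an m'-measurable set multiplies by its kernel measure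
  have hA : ∀ (s c : Set Ω), MeasurableSet s → MeasurableSet[m'] c →
      ∀ᵐ a ∂ν, κ a (s ∩ c) = κ a s * κ a c := by
    intro s c hs hc
    filter_upwards [hind c hc] with a ha
    by_cases hac : a ∈ c
    · rw [Set.indicator_of_mem hac] at ha
      rw [ha, mul_one]
      have hdiff : κ a (s \ c) = 0 := by
        have hle : κ a (s \ c) ≤ κ a cᶜ := measure_mono fun x hx => hx.2
        have hcc : κ a cᶜ = 0 := by
          rw [measure_compl (hm' _ hc) (measure_ne_top _ _), ha, measure_univ, tsub_self]
        exact le_antisymm (hle.trans_eq hcc) zero_le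
      have := measure_inter_add_diff (μ := κ a) s (hm' _ hc)
      rw [hdiff, add_zero] at this
      exact this
    · rw [Set.indicator_of_notMem hac] at ha
      rw [ha, mul_zero]
      exact measure_inter_null_of_null_right s ha
  -- main independence of σ-algebras
  have hmain : ProbabilityTheory.Kernel.Indep (MeasurableSpace.comap Y inferInstance)
      ((MeasurableSpace.comap D inferInstance) ⊔ (MeasurableSpace.comap X₁ inferInstance))
      κ ν := by
    have hmY : MeasurableSpace.comap Y inferInstance ≤ mΩ := measurable_iff_comap_le.mp hY
    have hmD : MeasurableSpace.comap D inferInstance ≤ mΩ :=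
      measurable_iff_comap_le.mp (hX₂.sub hX₁)
    have hmX : MeasurableSpace.comap X₁ inferInstance ≤ m' := hcomapX₁
    refine ProbabilityTheory.Kernel.IndepSets.indep hmY (sup_le hmD (hmX.trans hm'))
      (@MeasurableSpace.isPiSystem_measurableSet Ω (MeasurableSpace.comap Y inferInstance))
      (p2 := {t | ∃ d c, MeasurableSet[MeasurableSpace.comap D inferInstance] d ∧
        MeasurableSet[MeasurableSpace.comap X₁ inferInstance] c ∧ t = d ∩ c})
      ?_ (@MeasurableSpace.generateFrom_measurableSet Ω
        (MeasurableSpace.comap Y inferInstance)).symm ?_ ?_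
    · rintro t1 ⟨d1, c1, hd1, hc1, rfl⟩ t2 ⟨d2, c2, hd2, hc2, rfl⟩ _
      exact ⟨d1 ∩ d2, c1 ∩ c2, hd1.inter hd2, hc1.inter hc2, by
        rw [Set.inter_inter_inter_comm]⟩
    · apply le_antisymm
      · refine sup_le ?_ ?_
        · intro s hs
          exact MeasurableSpace.measurableSet_generateFrom
            ⟨s, Set.univ, hs, MeasurableSet.univ, (Set.inter_univ s).symm⟩
        · intro s hs
          exact MeasurableSpace.measurableSet_generateFrom
            ⟨Set.univ, s, MeasurableSet.univ, hs, (Set.univ_inter s).symm⟩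
      · refine MeasurableSpace.generateFrom_le ?_
        rintro t ⟨d, c, hd, hc, rfl⟩
        exact MeasurableSet.inter (le_sup_left (α := MeasurableSpace Ω) _ hd)
          (le_sup_right (α := MeasurableSpace Ω) _ hc)
    · rintro t1 t2 ht1 ⟨d, c, hd, hc, rfl⟩
      have hd' : MeasurableSet d := hmD _ hd
      have hc' : MeasurableSet[m'] c := hmX _ hc
      have h2ap : ∀ᵐ a ∂ν, κ a (t1 ∩ d) = κ a t1 * κ a d := h2 t1 d ht1 hd
      filter_upwards [h2ap, hA (t1 ∩ d) c ((hmY _ ht1).inter hd') hc', hA d c hd' hc']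
        with a k1 k2 k3
      calc κ a (t1 ∩ (d ∩ c)) = κ a ((t1 ∩ d) ∩ c) := by rw [Set.inter_assoc]
        _ = κ a (t1 ∩ d) * κ a c := k2
        _ = κ a t1 * κ a d * κ a c := by rw [k1]
        _ = κ a t1 * κ a (d ∩ c) := by rw [k3, mul_assoc]
  -- X₂ is measurable w.r.t. σ(D) ⊔ σ(X₁)
  have hX₂le : MeasurableSpace.comap X₂ inferInstance ≤
      (MeasurableSpace.comap D inferInstance) ⊔ (MeasurableSpace.comap X₁ inferInstance) := by
    have hDm : Measurable[(MeasurableSpace.comap D inferInstance) ⊔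
        (MeasurableSpace.comap X₁ inferInstance)] D :=
      (Measurable.of_comap_le le_rfl).mono le_sup_left le_rfl
    have hX₁m : Measurable[(MeasurableSpace.comap D inferInstance) ⊔
        (MeasurableSpace.comap X₁ inferInstance)] X₁ :=
      (Measurable.of_comap_le le_rfl).mono le_sup_right le_rfl
    have hX₂m : Measurable[(MeasurableSpace.comap D inferInstance) ⊔
        (MeasurableSpace.comap X₁ inferInstance)] X₂ := by
      have : X₂ = fun ω => D ω + X₁ ω := by
        funext ω; simp [hDdef]
      rw [this]
      exact hDm.add hX₁m
    exact measurable_iff_comap_le.mp hX₂m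
  exact ProbabilityTheory.Kernel.indep_of_indep_of_le_right hmain hX₂le
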